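/- Let f : ℝⁿ → ℝ ∪ {+∞} be a closed (lower semicontinuous), proper, convex function whose effective domain dom f is nonempty, closed and convex. If f is non-steep — i.e., f is differentiable on the relative interior rint(dom f) and ‖∇f(x_k)‖ remains bounded along every sequence (x_k) in rint(dom f) converging to a point of the relative boundary of dom f — then every relative boundary point of dom f belongs to dom ∂f, and dom ∂f = dom f. -/

import Mathlib

open Set Filter Topology

noncomputable section

abbrev E (n : ℕ) : Type := EuclideanSpace ℝ (Fin n)

/-- effective domain of an extended-real-valued function -/
def edom {n : ℕ} (f : E n → EReal) : Set (E n) := {x | f x < ⊤}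

/-- proper: never −∞ and not identically +∞ -/
def properE {n : ℕ} (f : E n → EReal) : Prop := (∀ x, f x ≠ ⊥) ∧ ∃ x, f x ≠ ⊤

def convexE {n : ℕ} (f : E n → EReal) : Prop :=
  ∀ x y : E n, ∀ a b : ℝ, 0 ≤ a → 0 ≤ b → a + b = 1 →
    f (a • x + b • y) ≤ (a : EReal) * f x + (b : EReal) * f y

def stronglyConvexE {n : ℕ} (ρ : ℝ) (f : E n → EReal) : Prop :=
  convexE (fun x => f x - (((ρ / 2) * ‖x‖ ^ 2 : ℝ) : EReal))

def subdiff {n : ℕ} (f : E n → EReal) (x : E n) : Set (E n) :=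
  {v | ∀ y : E n, f x + ((inner ℝ v (y - x) : ℝ) : EReal) ≤ f y}

def domSubdiff {n : ℕ} (f : E n → EReal) : Set (E n) := {x | (subdiff f x).Nonempty}

/-- relative boundary -/
def rbd {n : ℕ} (s : Set (E n)) : Set (E n) := closure s \ intrinsicInterior ℝ s

def Steep {n : ℕ} (f : E n → EReal) : Prop :=
  ∃ g : E n → E n,
    (∀ x ∈ intrinsicInterior ℝ (edom f),
      HasGradientAt (fun y => (f y).toReal) (g x) x) ∧
    ∀ (xs : ℕ → E n) (p : E n),
      (∀ k, xs k ∈ intrinsicInterior ℝ (edom f)) →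
      p ∈ rbd (edom f) → Tendsto xs atTop (nhds p) →
      Tendsto (fun k => ‖g (xs k)‖) atTop atTop

def NonSteep {n : ℕ} (f : E n → EReal) : Prop :=
  ∃ g : E n → E n,
    (∀ x ∈ intrinsicInterior ℝ (edom f),
      HasGradientAt (fun y => (f y).toReal) (g x) x) ∧
    ∀ (xs : ℕ → E n) (p : E n),
      (∀ k, xs k ∈ intrinsicInterior ℝ (edom f)) →
      p ∈ rbd (edom f) → Tendsto xs atTop (nhds p) →
      ∃ M : ℝ, ∀ k, ‖g (xs k)‖ ≤ M

/-- convex conjugate -/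
def conjE {n : ℕ} (f : E n → EReal) (z : E n) : EReal :=
  ⨆ x : E n, (((inner ℝ x z : ℝ) : EReal) - f x)

def strictConvexOnE {n : ℕ} (s : Set (E n)) (f : E n → EReal) : Prop :=
  ∀ x ∈ s, ∀ y ∈ s, x ≠ y → ∀ a b : ℝ, 0 < a → 0 < b → a + b = 1 →
    f (a • x + b • y) < (a : EReal) * f x + (b : EReal) * f y

def EssentiallySmoothE {n : ℕ} (f : E n → EReal) : Prop :=
  ∃ g : E n → E n,
    (∀ x ∈ interior (edom f), HasGradientAt (fun y => (f y).toReal) (g x) x) ∧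
    ∀ (xs : ℕ → E n) (p : E n),
      (∀ k, xs k ∈ interior (edom f)) → p ∈ frontier (edom f) →
      Tendsto xs atTop (nhds p) →
      Tendsto (fun k => ‖g (xs k)‖) atTop atTop

def EssentiallyStrictlyConvexE {n : ℕ} (f : E n → EReal) : Prop :=
  ∀ s : Set (E n), s ⊆ domSubdiff f → Convex ℝ s → strictConvexOnE s f

def LegendreE {n : ℕ} (f : E n → EReal) : Prop :=
  EssentiallySmoothE f ∧ EssentiallyStrictlyConvexE f

def SupercoerciveE {n : ℕ} (f : E n → EReal) : Prop :=
  ∀ M : ℝ, ∃ R : ℝ, ∀ x : E n, R ≤ ‖x‖ → ((M * ‖x‖ : ℝ) : EReal) ≤ f x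

lemma combo_closure_intrinsicInterior {n : ℕ} {s : Set (E n)} (hs : Convex ℝ s)
    {x y : E n} (hx : x ∈ closure s) (hy : y ∈ intrinsicInterior ℝ s)
    {a b : ℝ} (ha : 0 ≤ a) (hb : 0 < b) (hab : a + b = 1) :
    a • x + b • y ∈ intrinsicInterior ℝ s := by
  have hys : y ∈ s := intrinsicInterior_subset hy
  set W := (affineSpan ℝ s).direction with hW
  let φ : W →ᵃⁱ[ℝ] E n :=
    (AffineIsometryEquiv.constVAdd ℝ (E n) y).toAffineIsometry.comp W.subtypeₗᵢ.toAffineIsometry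
  have hφ : ∀ w : W, φ w = y + (w : E n) := fun w => rfl
  have hrange : s ⊆ Set.range φ := by
    intro p hp
    refine ⟨⟨p - y, ?_⟩, ?_⟩
    · simpa using AffineSubspace.vsub_mem_direction (subset_affineSpan ℝ s hp)
        (subset_affineSpan ℝ s hys)
    · simp [hφ]
  set t : Set W := φ ⁻¹' s with ht
  have himg : φ '' t = s := by
    apply Set.Subset.antisymm (Set.image_preimage_subset _ _)
    intro p hp
    obtain ⟨w, hw⟩ := hrange hp
    exact ⟨w, show φ w ∈ s by rw [hw]; exact hp, hw⟩
  have hconvt : Convex ℝ t := hs.affine_preimage φ.toAffineMap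
  have hce : IsClosedEmbedding φ := φ.isometry.isClosedEmbedding
  have hclos : closure s = φ '' closure t := by
    rw [← himg, hce.closure_image_eq]
  have hint : intrinsicInterior ℝ s = φ '' intrinsicInterior ℝ t := by
    rw [← himg, AffineIsometry.image_intrinsicInterior]
  have htne : (0 : W) ∈ t := by
    rw [ht, Set.mem_preimage, hφ]; simpa using hys
  have hspan : affineSpan ℝ t = ⊤ := by
    have hlin : φ.toAffineMap.linear = W.subtype := rfl
    have h1 : (affineSpan ℝ t).map φ.toAffineMap = affineSpan ℝ s := by
      rw [AffineSubspace.map_span, AffineIsometry.coe_toAffineMap, himg]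
    have h2 : ((affineSpan ℝ t).direction).map W.subtype = W := by
      rw [← hlin, ← AffineSubspace.map_direction, h1]
    rw [← AffineSubspace.direction_eq_top_iff_of_nonempty ⟨0, subset_affineSpan ℝ t htne⟩]
    have h3 : ((⊤ : Submodule ℝ W)).map W.subtype = W := by
      simp [Submodule.map_subtype_top]
    exact Submodule.map_injective_of_injective W.injective_subtype (h2.trans h3.symm)
  have hsub : intrinsicInterior ℝ t ⊆ interior t := by
    have hopen : IsOpenMap ((↑) : affineSpan ℝ t → W) := by
      have h4 : IsOpen ((affineSpan ℝ t : Set W)) := by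
        rw [hspan]; simp
      exact h4.isOpenMap_subtype_val
    intro z hz
    obtain ⟨w, hw, rfl⟩ := (mem_intrinsicInterior).1 hz
    have h5 := hopen.image_interior_subset _ ⟨w, hw, rfl⟩
    exact interior_mono (Set.image_preimage_subset _ _) h5
  rw [hclos] at hx
  obtain ⟨u, hu, hxu⟩ := hx
  rw [hint] at hy ⊢
  obtain ⟨v, hv, hyv⟩ := hy
  have hv' : v ∈ interior t := hsub hv
  have hcombo : a • u + b • v ∈ interior t :=
    hconvt.combo_closure_interior_mem_interior hu hv' ha hb hab
  refine ⟨a • u + b • v, interior_subset_intrinsicInterior hcombo, ?_⟩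
  have hcoe : ((a • u + b • v : W) : E n) = a • (u : E n) + b • (v : E n) := by
    push_cast; ring_nf
  have hv0 : (v : E n) = 0 := by
    have h6 := hyv
    rw [hφ] at h6
    have h7 : y + (v : E n) = y + 0 := by rw [add_zero]; exact h6
    exact add_left_cancel h7
  rw [hφ, hcoe, hv0, ← hxu, hφ]
  have ha' : a = 1 - b := by linarith
  subst ha'
  module

lemma grad_mem_subdiff {n : ℕ} {f : E n → EReal}
    (hproper : properE f) (hconv : convexE f)
    {x gx : E n} (hx : x ∈ edom f)
    (hg : HasGradientAt (fun y => (f y).toReal) gx x) : gx ∈ subdiff f x := by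
  have hxb : f x ≠ ⊥ := hproper.1 x
  have hxt : f x ≠ ⊤ := hx.ne
  set rx : ℝ := (f x).toReal with hrx
  have hfx : f x = (rx : EReal) := (EReal.coe_toReal hxt hxb).symm
  intro y
  by_cases hyt : f y = ⊤
  · rw [hyt]; exact le_top
  have hyb : f y ≠ ⊥ := hproper.1 y
  set ry : ℝ := (f y).toReal with hry
  have hfy : f y = (ry : EReal) := (EReal.coe_toReal hyt hyb).symm
  rw [hfx, hfy, ← EReal.coe_add, EReal.coe_le_coe_iff]
  -- goal : rx + ⟪gx, y - x⟫ ≤ ry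
  have key : (inner ℝ gx (y - x) : ℝ) ≤ ry - rx := by
    -- directional derivative
    set F : E n → ℝ := fun z => (f z).toReal with hF
    set c : ℝ → E n := fun t => x + t • (y - x) with hc
    have hc0 : c 0 = x := by simp [hc]
    have hder : HasDerivAt (fun t => F (c t)) ((inner ℝ gx (y - x) : ℝ)) 0 := by
      have h1 : HasDerivAt c (y - x) 0 := by
        exact (((hasDerivAt_id (0:ℝ)).smul_const (y - x)).const_add x).congr_deriv (one_smul ℝ _)
      have h2 : HasFDerivAt F (InnerProductSpace.toDual ℝ (E n) gx) (c 0) := by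
        rw [hc0]; exact hg.hasFDerivAt
      have h3 := h2.comp_hasDerivAt 0 h1
      simp only [InnerProductSpace.toDual_apply_apply] at h3
      exact h3
    have hslope : Tendsto (slope (fun t => F (c t)) 0) (𝓝[>] (0:ℝ)) (𝓝 ((inner ℝ gx (y - x) : ℝ))) :=
      (hasDerivAt_iff_tendsto_slope.1 hder).mono_left
        (nhdsWithin_mono _ fun t ht => ne_of_gt ht)
    refine le_of_tendsto hslope ?_
    filter_upwards [Ioo_mem_nhdsGT_of_mem (Set.left_mem_Ico.2 one_pos)] with t ht
    obtain ⟨ht0, ht1⟩ := ht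
    have hcomb := hconv x y (1 - t) t (by linarith) ht0.le (by ring)
    have hpt : (1 - t) • x + t • y = c t := by rw [hc]; module
    rw [hpt, hfx, hfy] at hcomb
    have hrhs : ((1 - t : ℝ) : EReal) * (rx : EReal) + (t : EReal) * (ry : EReal)
        = (((1 - t) * rx + t * ry : ℝ) : EReal) := by
      rw [← EReal.coe_mul, ← EReal.coe_mul, ← EReal.coe_add]
    rw [hrhs] at hcomb
    have hctb : f (c t) ≠ ⊥ := hproper.1 _
    have hFle : F (c t) ≤ (1 - t) * rx + t * ry := by
      have := EReal.toReal_le_toReal hcomb hctb (EReal.coe_ne_top _)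
      rw [EReal.toReal_coe] at this
      exact this
    have hF0 : F (c 0) = rx := by rw [hc0]
    rw [slope_def_field, hF0, sub_zero, div_le_iff₀ ht0]
    nlinarith [hFle]
  linarith

lemma rbd_subset_domSubdiff {n : ℕ} {f : E n → EReal}
    (hlsc : LowerSemicontinuous f) (hproper : properE f) (hconv : convexE f)
    (hdom_ne : (edom f).Nonempty) (hdom_cl : IsClosed (edom f)) (hdom_conv : Convex ℝ (edom f))
    (hnonsteep : NonSteep f) :
    rbd (edom f) ⊆ domSubdiff f := by
  obtain ⟨g, hg, hbd⟩ := hnonsteep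
  intro x hx
  have hxdom : x ∈ edom f := by
    have := hx.1; rwa [hdom_cl.closure_eq] at this
  obtain ⟨y, hy⟩ := hdom_ne.intrinsicInterior hdom_conv
  set t : ℕ → ℝ := fun k => 1 / ((k : ℝ) + 2) with htdef
  have ht0 : ∀ k, 0 < t k := fun k => by positivity
  have ht1 : ∀ k, t k < 1 := fun k => by
    rw [htdef]
    rw [div_lt_one (by positivity)]
    have : (0:ℝ) ≤ (k:ℝ) := Nat.cast_nonneg k
    linarith
  set xs : ℕ → E n := fun k => (1 - t k) • x + t k • y with hxs
  have hxs_mem : ∀ k, xs k ∈ intrinsicInterior ℝ (edom f) := fun k =>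
    combo_closure_intrinsicInterior hdom_conv (subset_closure hxdom) hy
      (by linarith [ht1 k]) (ht0 k) (by ring)
  have hxs_dom : ∀ k, xs k ∈ edom f := fun k => intrinsicInterior_subset (hxs_mem k)
  have htlim : Tendsto t atTop (𝓝 0) := by
    have h0 : Tendsto (fun k : ℕ => ((k:ℝ) + 2)) atTop atTop :=
      tendsto_atTop_add_const_right _ 2 tendsto_natCast_atTop_atTop
    simpa [htdef, one_div, Pi.inv_def] using h0.inv_tendsto_atTop
  have hxs_lim : Tendsto xs atTop (𝓝 x) := by
    have h1 : ∀ k, xs k = x + t k • (y - x) := fun k => by rw [hxs]; module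
    have h2 : Tendsto (fun k => x + t k • (y - x)) atTop (𝓝 (x + (0:ℝ) • (y - x))) :=
      tendsto_const_nhds.add (htlim.smul_const (y - x))
    simpa [funext h1] using h2
  obtain ⟨M, hM⟩ := hbd xs x hxs_mem hx hxs_lim
  -- extract convergent subsequence of gradients
  have hball : ∀ k, g (xs k) ∈ Metric.closedBall (0 : E n) M := fun k => by
    simpa [Metric.mem_closedBall, dist_eq_norm] using hM k
  obtain ⟨v, -, ψ, hψ, hψlim⟩ :=
    tendsto_subseq_of_bounded Metric.isBounded_closedBall hball
  refine ⟨v, ?_⟩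
  intro y'
  by_cases hy't : f y' = ⊤
  · rw [hy't]; exact le_top
  have hy'b : f y' ≠ ⊥ := hproper.1 y'
  set ry : ℝ := (f y').toReal with hry
  have hfy' : f y' = (ry : EReal) := (EReal.coe_toReal hy't hy'b).symm
  have hxb : f x ≠ ⊥ := hproper.1 x
  have hxt : f x ≠ ⊤ := hxdom.ne
  set rx : ℝ := (f x).toReal with hrx
  have hfx : f x = (rx : EReal) := (EReal.coe_toReal hxt hxb).symm
  rw [hfx, hfy', ← EReal.coe_add, EReal.coe_le_coe_iff]
  -- enough: ∀ ε > 0, rx + ⟪v, y' - x⟫ ≤ ry + ε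
  have main : ∀ ε : ℝ, 0 < ε → rx + (inner ℝ v (y' - x) : ℝ) ≤ ry + ε := by
    intro ε hε
    -- lsc lower bound eventually
    have hlow : ∀ᶠ k in atTop, rx - ε < (f (xs k)).toReal := by
      have h1 : ((rx - ε : ℝ) : EReal) < f x := by
        rw [hfx, EReal.coe_lt_coe_iff]; linarith
      have h2 := hlsc x _ h1
      have h3 := hxs_lim.eventually h2
      filter_upwards [h3] with k hk
      have hkt : f (xs k) ≠ ⊤ := (hxs_dom k).ne
      have hkb : f (xs k) ≠ ⊥ := hproper.1 _
      rw [← EReal.coe_toReal hkt hkb, gt_iff_lt, EReal.coe_lt_coe_iff] at hk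
      exact hk
    -- subgradient inequality at xs k, in real form
    have hsg : ∀ k, (f (xs k)).toReal + (inner ℝ (g (xs k)) (y' - xs k) : ℝ) ≤ ry := by
      intro k
      have h4 := grad_mem_subdiff hproper hconv (hxs_dom k) (hg _ (hxs_mem k)) y'
      have hkt : f (xs k) ≠ ⊤ := (hxs_dom k).ne
      have hkb : f (xs k) ≠ ⊥ := hproper.1 _
      rw [← EReal.coe_toReal hkt hkb, hfy', ← EReal.coe_add, EReal.coe_le_coe_iff] at h4
      exact h4
    -- limit of inner products along subsequence
    have hinner : Tendsto (fun j => (inner ℝ (g (xs (ψ j))) (y' - xs (ψ j)) : ℝ)) atTop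
        (𝓝 ((inner ℝ v (y' - x) : ℝ))) := by
      have h5 : Tendsto (fun j => y' - xs (ψ j)) atTop (𝓝 (y' - x)) :=
        tendsto_const_nhds.sub (hxs_lim.comp hψ.tendsto_atTop)
      exact hψlim.inner h5
    have hfinal : rx - ε + (inner ℝ v (y' - x) : ℝ) ≤ ry := by
      refine le_of_tendsto (tendsto_const_nhds.add hinner) ?_
      obtain ⟨N, hN⟩ := eventually_atTop.1 hlow
      filter_upwards [eventually_ge_atTop N] with j hj
      have hjN : N ≤ ψ j := le_trans hj (hψ.le_apply)
      have := hN _ hjN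
      linarith [hsg (ψ j)]
    linarith
  by_contra hcon
  push_neg at hcon
  have := main ((rx + (inner ℝ v (y' - x) : ℝ) - ry) / 2) (by linarith)
  linarith

theorem stmt1 {n : ℕ} (f : E n → EReal)
    (hlsc : LowerSemicontinuous f) (hproper : properE f) (hconv : convexE f)
    (hdom_ne : (edom f).Nonempty) (hdom_cl : IsClosed (edom f)) (hdom_conv : Convex ℝ (edom f))
    (hnonsteep : NonSteep f) :
    (rbd (edom f) ⊆ domSubdiff f) ∧ domSubdiff f = edom f := by
  have hrbd := rbd_subset_domSubdiff hlsc hproper hconv hdom_ne hdom_cl hdom_conv hnonsteep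
  refine ⟨hrbd, ?_⟩
  apply Set.Subset.antisymm
  · rintro x ⟨v, hv⟩
    obtain ⟨y₀, hy₀⟩ := hdom_ne
    have h := hv y₀
    by_contra hxt
    have hfx : f x = ⊤ := top_le_iff.1 (not_lt.1 hxt)
    rw [hfx, EReal.top_add_of_ne_bot (EReal.coe_ne_bot _)] at h
    exact absurd (top_le_iff.1 h) hy₀.ne
  · intro x hx
    by_cases hxi : x ∈ intrinsicInterior ℝ (edom f)
    · obtain ⟨g, hg, -⟩ := hnonsteep
      exact ⟨g x, grad_mem_subdiff hproper hconv hx (hg x hxi)⟩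
    · exact hrbd ⟨subset_closure hx, hxi⟩


end
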